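/- Let T be a hyponormal bilateral weighted shift on H with nonzero weight sequence (β_n)_{n∈ℤ}, M = lim_{n→+∞} |β_n| and m = lim_{n→−∞} |β_n|, with m > 0. Then for every λ ∈ ℂ with |λ| < m, the operator λI − T is bounded below by m − |λ| (i.e., ‖(λI − T)x‖ ≥ (m − |λ|)‖x‖ for all x ∈ H) and has dense range; consequently λI − T is invertible, so λ belongs to the resolvent set of T. -/

import Mathlib

open scoped ComplexConjugate

local notation "⟪" x ", " y "⟫" => @inner ℂ _ _ x y

section Aux

variable {H : Type*} [NormedAddCommGroup H] [InnerProductSpace ℂ H]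

/-- Parseval: the squared coefficients sum to the squared norm. -/
lemma aux_hasSum_sq (e : HilbertBasis ℤ ℂ H) (x : H) :
    HasSum (fun k : ℤ => ‖⟪e k, x⟫‖ ^ 2) (‖x‖ ^ 2) := by
  have h := (e.hasSum_inner_mul_inner x x).mapL Complex.reCLM
  have h1 : ∀ k : ℤ, Complex.reCLM (⟪x, e k⟫ * ⟪e k, x⟫) = ‖⟪e k, x⟫‖ ^ 2 := by
    intro k
    rw [← inner_conj_symm (e k) x, RCLike.mul_conj]
    rw [RCLike.norm_conj]
    simp [← Complex.ofReal_pow]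
  have h2 : Complex.reCLM ⟪x, x⟫ = ‖x‖ ^ 2 := by
    simpa using inner_self_eq_norm_sq (𝕜 := ℂ) x
  simpa only [h1, h2] using h

/-- Lower bound from coefficientwise lower bounds along a bijection. -/
lemma aux_lower (e : HilbertBasis ℤ ℂ H) (A : H →L[ℂ] H) (σ : ℤ ≃ ℤ) (c : ℝ) (hc : 0 ≤ c)
    (h : ∀ (x : H) (k : ℤ), c * ‖⟪e (σ k), x⟫‖ ≤ ‖⟪e k, A x⟫‖) (x : H) :
    c * ‖x‖ ≤ ‖A x‖ := by
  have hx : HasSum (fun k : ℤ => ‖⟪e (σ k), x⟫‖ ^ 2) (‖x‖ ^ 2) :=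
    (σ.hasSum_iff).2 (aux_hasSum_sq e x)
  have h1 : HasSum (fun k : ℤ => c ^ 2 * ‖⟪e (σ k), x⟫‖ ^ 2) (c ^ 2 * ‖x‖ ^ 2) :=
    hx.mul_left _
  have h2 := aux_hasSum_sq e (A x)
  have key : c ^ 2 * ‖x‖ ^ 2 ≤ ‖A x‖ ^ 2 := by
    refine hasSum_le (fun k => ?_) h1 h2
    have := h x k
    nlinarith [norm_nonneg (⟪e (σ k), x⟫), norm_nonneg (⟪e k, A x⟫),
      mul_nonneg hc (norm_nonneg (⟪e (σ k), x⟫))]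
  have h3 : Real.sqrt ((c * ‖x‖) ^ 2) ≤ Real.sqrt (‖A x‖ ^ 2) :=
    Real.sqrt_le_sqrt (by rw [mul_pow]; exact key)
  rwa [Real.sqrt_sq (by positivity), Real.sqrt_sq (norm_nonneg _)] at h3

/-- Coefficients of a weighted shift. -/
lemma aux_coeff (e : HilbertBasis ℤ ℂ H) (β : ℤ → ℂ) (T : H →L[ℂ] H)
    (hT : ∀ n : ℤ, T (e n) = β n • e (n + 1)) (k : ℤ) (x : H) :
    ⟪e k, T x⟫ = β (k - 1) * ⟪e (k - 1), x⟫ := by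
  have hde : Dense ((Submodule.span ℂ (Set.range ⇑e)) : Set H) :=
    Submodule.dense_iff_topologicalClosure_eq_top.2 e.dense_span
  have key : (innerSL ℂ (e k)).comp T = β (k - 1) • innerSL ℂ (e (k - 1)) := by
    refine ContinuousLinearMap.ext_on hde ?_
    rintro _ ⟨n, rfl⟩
    have ho := orthonormal_iff_ite.mp e.orthonormal
    simp only [ContinuousLinearMap.coe_comp', Function.comp_apply, innerSL_apply_apply,
      ContinuousLinearMap.coe_smul', Pi.smul_apply, smul_eq_mul, hT n, inner_smul_right,
      ho k (n + 1), ho (k - 1) n]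
    by_cases hkn : k = n + 1
    · have : k - 1 = n := by omega
      simp [hkn, this]
    · have : k - 1 ≠ n := by omega
      simp [hkn, this]
  have := DFunLike.congr_fun key x
  simpa using this

end Aux

/-- For a hyponormal bilateral weighted shift with nonzero weights and `m > 0`,
every `λ` with `‖λ‖ < m` yields `λI - T` bounded below by `m - ‖λ‖`, with dense
range, hence invertible: `λ` lies in the resolvent set of `T`. -/
theorem resolvent_of_hyponormal_bilateral_weighted_shift
    {H : Type*} [NormedAddCommGroup H] [InnerProductSpace ℂ H] [CompleteSpace H]
    (e : HilbertBasis ℤ ℂ H) (β : ℤ → ℂ) (T : H →L[ℂ] H)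
    (hT : ∀ n : ℤ, T (e n) = β n • e (n + 1))
    (hmono : ∀ n : ℤ, ‖β n‖ ≤ ‖β (n + 1)‖)
    (hnz : ∀ n : ℤ, β n ≠ 0)
    (M : ℝ) (hM : Filter.Tendsto (fun n : ℤ => ‖β n‖) Filter.atTop (nhds M))
    (m : ℝ) (hm : Filter.Tendsto (fun n : ℤ => ‖β n‖) Filter.atBot (nhds m))
    (hmpos : 0 < m) :
    ∀ lam : ℂ, ‖lam‖ < m →
      (∀ x : H, (m - ‖lam‖) * ‖x‖ ≤ ‖(lam • (1 : H →L[ℂ] H) - T) x‖) ∧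
      DenseRange ⇑(lam • (1 : H →L[ℂ] H) - T) ∧
      lam ∉ spectrum ℂ T := by
  -- m is a lower bound for the weights
  have hmonoZ : Monotone fun n : ℤ => ‖β n‖ := monotone_int_of_le_succ hmono
  have hmle : ∀ n : ℤ, m ≤ ‖β n‖ := fun n =>
    le_of_tendsto hm (Filter.eventually_atBot.2 ⟨n, fun k hk => hmonoZ hk⟩)
  -- lower bound for T
  have hTlow : ∀ x : H, m * ‖x‖ ≤ ‖T x‖ := by
    refine aux_lower e T (Equiv.subRight (1 : ℤ)) m hmpos.le (fun x k => ?_)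
    rw [aux_coeff e β T hT k x, norm_mul]
    exact mul_le_mul_of_nonneg_right (hmle (k - 1)) (norm_nonneg _)
  -- adjoint coefficients and lower bound for the adjoint
  have hadj : ∀ (k : ℤ) (x : H),
      ⟪e k, (ContinuousLinearMap.adjoint T) x⟫ = conj (β k) * ⟪e (k + 1), x⟫ := by
    intro k x
    rw [ContinuousLinearMap.adjoint_inner_right, hT k, inner_smul_left]
  have hT'low : ∀ x : H, m * ‖x‖ ≤ ‖(ContinuousLinearMap.adjoint T) x‖ := by
    refine aux_lower e (ContinuousLinearMap.adjoint T) (Equiv.addRight (1 : ℤ)) m hmpos.le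
      (fun x k => ?_)
    rw [hadj k x, norm_mul, RCLike.norm_conj]
    exact mul_le_mul_of_nonneg_right (hmle k) (norm_nonneg _)
  intro lam hlam
  set A : H →L[ℂ] H := lam • (1 : H →L[ℂ] H) - T with hA
  have hApp : ∀ x : H, A x = lam • x - T x := by
    intro x; simp [hA]
  -- bounded below
  have hlow : ∀ x : H, (m - ‖lam‖) * ‖x‖ ≤ ‖A x‖ := by
    intro x
    have h1 : ‖T x‖ - ‖lam • x‖ ≤ ‖T x - lam • x‖ := norm_sub_norm_le _ _
    have h2 : ‖lam • x‖ = ‖lam‖ * ‖x‖ := norm_smul _ _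
    rw [hApp x, norm_sub_rev]
    calc (m - ‖lam‖) * ‖x‖ = m * ‖x‖ - ‖lam‖ * ‖x‖ := by ring
      _ ≤ ‖T x‖ - ‖lam • x‖ := by rw [h2]; linarith [hTlow x]
      _ ≤ ‖T x - lam • x‖ := h1
  have hcpos : 0 < m - ‖lam‖ := by linarith
  -- dense range
  have hdense : DenseRange ⇑A := by
    have horth : (LinearMap.range (A : H →ₗ[ℂ] H))ᗮ = ⊥ := by
      rw [Submodule.eq_bot_iff]
      intro y hy
      have hy' : ∀ x : H, ⟪A x, y⟫ = 0 := fun x =>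
        (Submodule.mem_orthogonal _ _).1 hy (A x) (LinearMap.mem_range_self _ x)
      have hTadj : (ContinuousLinearMap.adjoint T) y = conj lam • y := by
        have key : ∀ x : H, ⟪x, (ContinuousLinearMap.adjoint T) y - conj lam • y⟫ = 0 := by
          intro x
          have h0 := hy' x
          rw [hApp x, inner_sub_left, inner_smul_left, sub_eq_zero] at h0
          rw [inner_sub_right, ContinuousLinearMap.adjoint_inner_right, inner_smul_right,
            ← h0, sub_self]
        have := key ((ContinuousLinearMap.adjoint T) y - conj lam • y)
        rw [inner_self_eq_zero] at this
        exact sub_eq_zero.1 this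
      have h1 : m * ‖y‖ ≤ ‖lam‖ * ‖y‖ := by
        have := hT'low y
        rwa [hTadj, norm_smul, RCLike.norm_conj] at this
      have : ‖y‖ = 0 := by nlinarith [norm_nonneg y]
      exact norm_eq_zero.1 this
    have : (LinearMap.range (A : H →ₗ[ℂ] H)).topologicalClosure = ⊤ :=
      Submodule.topologicalClosure_eq_top_iff.2 horth
    have hdr : Dense ((LinearMap.range (A : H →ₗ[ℂ] H) : Submodule ℂ H) : Set H) :=
      Submodule.dense_iff_topologicalClosure_eq_top.2 this
    simpa [DenseRange, LinearMap.coe_range] using hdr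
  refine ⟨fun x => by simpa using hlow x, hdense, ?_⟩
  -- invertibility
  have hanti : AntilipschitzWith ⟨(m - ‖lam‖)⁻¹, by positivity⟩ ⇑A := by
    refine A.antilipschitz_of_bound (fun x => ?_)
    have := hlow x
    change ‖x‖ ≤ (m - ‖lam‖)⁻¹ * ‖A x‖
    rw [inv_mul_eq_div, le_div_iff₀ hcpos]
    linarith
  have hclosed : IsClosed (Set.range ⇑A) := hanti.isClosed_range A.uniformContinuous
  have hsurj : Function.Surjective ⇑A := by
    have : Set.range ⇑A = Set.univ := by
      rw [← hclosed.closure_eq]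
      exact hdense.closure_range
    exact Set.range_eq_univ.1 this
  have hinj : Function.Injective ⇑A := by
    intro x y hxy
    have : A (x - y) = 0 := by rw [map_sub, hxy, sub_self]
    have h0 := hlow (x - y)
    rw [this, norm_zero] at h0
    have : ‖x - y‖ = 0 := le_antisymm (by nlinarith [norm_nonneg (x - y)]) (norm_nonneg _)
    exact sub_eq_zero.1 (norm_eq_zero.1 this)
  have hunit : IsUnit A := ContinuousLinearMap.isUnit_iff_bijective.2 ⟨hinj, hsurj⟩
  intro hs
  rw [spectrum.mem_iff] at hs
  exact hs (by rwa [Algebra.algebraMap_eq_smul_one])
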